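/- arXiv:1602.00449 — 3 statements merged into one kernel-verified Lean document; each statement's English description precedes it below -/
import Mathlib

section
/- Let Φ, Θ ∈ L²(ℝ) and Γ(x) = −i·sign(x). Then the convolution identity (ΓΦ ⋆ ΓΘ)(x) − (Φ ⋆ Θ)(x) = Γ(x)·[(Φ ⋆ ΓΘ)(x) + (ΓΦ ⋆ Θ)(x)] holds for all x ∈ ℝ. -/
open MeasureTheory Filter Set

/-- Convolution `(f ⋆ g)(x) = ∫ f(y) g(x-y) dy`. -/
noncomputable def conv (f g : ℝ → ℂ) (x : ℝ) : ℂ := ∫ y : ℝ, f y * g (x - y)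

/-- `Γ(x) = -i·sign(x)`. -/
noncomputable def Gam (x : ℝ) : ℂ := -Complex.I * (Real.sign x : ℂ)

lemma measurable_gam : Measurable Gam := by
  have : Measurable fun x : ℝ => (Real.sign x : ℂ) := by
    have h : Measurable Real.sign := by
      have : Real.sign = fun x : ℝ => if x < 0 then (-1 : ℝ) else if 0 < x then 1 else 0 := by
        funext x; simp [Real.sign]
      rw [this]
      exact Measurable.ite (measurableSet_lt measurable_id measurable_const) measurable_const
        (Measurable.ite (measurableSet_lt measurable_const measurable_id) measurable_const
          measurable_const)
    exact Complex.measurable_ofReal.comp h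
  exact measurable_const.mul this

lemma gam_norm (x : ℝ) : ‖Gam x‖ ≤ 1 := by
  unfold Gam
  rw [norm_mul, norm_neg, Complex.norm_I, one_mul, Complex.norm_real]
  rcases lt_trichotomy x 0 with h|h|h <;>
    simp [Real.sign_of_neg, Real.sign_of_pos, h]

lemma memLp_gam_mul {f : ℝ → ℂ} (hf : MemLp f 2 (volume : Measure ℝ)) :
    MemLp (fun y => Gam y * f y) 2 (volume : Measure ℝ) := by
  apply MemLp.of_le hf ((measurable_gam.aestronglyMeasurable).mul hf.1)
  filter_upwards with y
  calc ‖Gam y * f y‖ = ‖Gam y‖ * ‖f y‖ := norm_mul _ _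
    _ ≤ 1 * ‖f y‖ := by gcongr; exact gam_norm y
    _ = ‖f y‖ := one_mul _

lemma gam_id {x y : ℝ} (hy : y ≠ 0) (hxy : x - y ≠ 0) :
    Gam y * Gam (x - y) - 1 = Gam x * (Gam (x - y) + Gam y) := by
  unfold Gam
  rcases hy.lt_or_gt with h1|h1 <;> rcases hxy.lt_or_gt with h2|h2
  · have hx : x < 0 := by linarith
    rw [Real.sign_of_neg h1, Real.sign_of_neg h2, Real.sign_of_neg hx]
    push_cast
    linear_combination (-1 : ℂ) * Complex.I_sq
  · rw [Real.sign_of_neg h1, Real.sign_of_pos h2]; push_cast; ring_nf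
    linear_combination (-1 : ℂ) * Complex.I_sq
  · rw [Real.sign_of_pos h1, Real.sign_of_neg h2]; push_cast; ring_nf
    linear_combination (-1 : ℂ) * Complex.I_sq
  · have hx : 0 < x := by linarith
    rw [Real.sign_of_pos h1, Real.sign_of_pos h2, Real.sign_of_pos hx]
    push_cast
    linear_combination (-1 : ℂ) * Complex.I_sq

lemma integrable_mul_L2 {f g : ℝ → ℂ} (hf : MemLp f 2 (volume : Measure ℝ))
    (hg : MemLp g 2 (volume : Measure ℝ)) :
    Integrable (fun y => f y * g y) (volume : Measure ℝ) := by
  rw [← memLp_one_iff_integrable]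
  have := hg.smul (φ := f) hf (p := 2) (q := 2) (r := 1) (hpqr := ⟨by simp [one_div, ENNReal.inv_two_add_inv_two]⟩)
  exact this


/-- For `Φ, Θ ∈ L²(ℝ)` the convolution identity
`(ΓΦ ⋆ ΓΘ)(x) − (Φ ⋆ Θ)(x) = Γ(x)·[(Φ ⋆ ΓΘ)(x) + (ΓΦ ⋆ Θ)(x)]` holds for all `x`. -/
theorem gamma_convolution_identity (Φ Θ : ℝ → ℂ)
    (hΦ : MemLp Φ 2 (volume : Measure ℝ))
    (hΘ : MemLp Θ 2 (volume : Measure ℝ)) :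
    ∀ x : ℝ,
      conv (fun y => Gam y * Φ y) (fun y => Gam y * Θ y) x - conv Φ Θ x
        = Gam x * (conv Φ (fun y => Gam y * Θ y) x
            + conv (fun y => Gam y * Φ y) Θ x) := by
  intro x
  have hmp : MeasurePreserving (fun y : ℝ => x - y) volume volume :=
    MeasureTheory.Measure.measurePreserving_sub_left volume x
  have hGΦ := memLp_gam_mul hΦ
  have hGΘ := memLp_gam_mul hΘ
  have hΘx : MemLp (fun y => Θ (x - y)) 2 (volume : Measure ℝ) :=
    hΘ.comp_measurePreserving hmp
  have hGΘx : MemLp (fun y => Gam (x - y) * Θ (x - y)) 2 (volume : Measure ℝ) :=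
    hGΘ.comp_measurePreserving hmp
  have hA : Integrable (fun y => (Gam y * Φ y) * (Gam (x - y) * Θ (x - y))) volume :=
    integrable_mul_L2 hGΦ hGΘx
  have hB : Integrable (fun y => Φ y * Θ (x - y)) volume := integrable_mul_L2 hΦ hΘx
  have hC : Integrable (fun y => Φ y * (Gam (x - y) * Θ (x - y))) volume :=
    integrable_mul_L2 hΦ hGΘx
  have hD : Integrable (fun y => (Gam y * Φ y) * Θ (x - y)) volume :=
    integrable_mul_L2 hGΦ hΘx
  unfold conv
  rw [← integral_sub hA hB, ← integral_add hC hD, ← integral_const_mul]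
  apply integral_congr_ae
  have h0 : ∀ᵐ y : ℝ, y ≠ 0 := by
    rw [ae_iff]; simpa using measure_singleton (0 : ℝ)
  have hx0 : ∀ᵐ y : ℝ, y ≠ x := by
    rw [ae_iff]; simpa using measure_singleton x
  filter_upwards [h0, hx0] with y hy hyx
  have hxy : x - y ≠ 0 := sub_ne_zero.2 (Ne.symm hyx)
  have key := gam_id hy hxy
  calc (Gam y * Φ y) * (Gam (x - y) * Θ (x - y)) - Φ y * Θ (x - y)
      = (Φ y * Θ (x - y)) * (Gam y * Gam (x - y) - 1) := by ring
    _ = (Φ y * Θ (x - y)) * (Gam x * (Gam (x - y) + Gam y)) := by rw [key]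
    _ = Gam x * (Φ y * (Gam (x - y) * Θ (x - y)) + (Gam y * Φ y) * Θ (x - y)) := by ring
end

section
/- Let ρ : ℝ → ℝ be a nonnegative integrable function and define the Stieltjes transform G(z) = ∫_ℝ ρ(x)/(z−x) dx for z ∈ ℂ∖ℝ. Then for x ∈ ℝ where ρ is continuous and the Hilbert transform H[ρ](x) exists, lim_{ε↓0} (1/π) G(x + iε) = H[ρ](x) − i ρ(x) (Sokhotski–Plemelj formula). -/
open MeasureTheory Filter Set

noncomputable def gSP (ε u : ℝ) : ℂ :=
  1 / ((u:ℂ) + ε * Complex.I) - if ε ≤ |u| then 1/(u:ℂ) else 0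

lemma denom_ne_zero {ε : ℝ} (hε : 0 < ε) (u : ℝ) : ((u:ℂ) + ε * Complex.I) ≠ 0 := by
  intro h
  have := congrArg Complex.im h
  simp at this
  exact hε.ne' this

lemma normSq_denom {ε : ℝ} (u : ℝ) :
    Complex.normSq ((u:ℂ) + ε * Complex.I) = u^2 + ε^2 := by
  simp [Complex.normSq_apply]; ring

lemma norm_denom {ε : ℝ} (u : ℝ) : ‖(u:ℂ) + ε * Complex.I‖ = Real.sqrt (u^2 + ε^2) := by
  rw [Complex.norm_def, normSq_denom]

lemma gSP_norm_le {ε : ℝ} (hε : 0 < ε) (u : ℝ) :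
    ‖gSP ε u‖ ≤ 2 * ε / (u^2 + ε^2) := by
  have hpos : 0 < u^2 + ε^2 := by positivity
  have hs : 0 < Real.sqrt (u^2 + ε^2) := Real.sqrt_pos.2 hpos
  by_cases h : ε ≤ |u|
  · -- far case
    have hu : u ≠ 0 := by
      intro h0; rw [h0] at h; simp at h; exact absurd h (not_le.2 hε)
    have huC : (u:ℂ) ≠ 0 := Complex.ofReal_ne_zero.2 hu
    have : gSP ε u = -(ε * Complex.I) / ((u:ℂ) * ((u:ℂ) + ε * Complex.I)) := by
      rw [gSP, if_pos h]
      rw [div_sub_div _ _ (denom_ne_zero hε u) huC, div_eq_div_iff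
        (mul_ne_zero (denom_ne_zero hε u) huC) (mul_ne_zero huC (denom_ne_zero hε u))]
      ring
    rw [this]
    rw [norm_div, norm_neg, norm_mul, norm_mul, norm_denom]
    simp only [Complex.norm_real, Complex.norm_I, Real.norm_eq_abs, mul_one]
    have h1 : |ε| = ε := abs_of_pos hε
    rw [h1]
    rw [div_le_div_iff₀ (by positivity) hpos]
    have key : Real.sqrt (u^2+ε^2) ≤ 2 * |u| := by
      rw [show 2*|u| = Real.sqrt ((2*|u|)^2) from (Real.sqrt_sq (by positivity)).symm]
      apply Real.sqrt_le_sqrt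
      have : ε^2 ≤ u^2 := by
        have := sq_le_sq' (neg_le_of_neg_le (by linarith [abs_nonneg u, neg_abs_le u])) h
        calc ε^2 ≤ |u|^2 := by nlinarith [abs_nonneg u, hε.le]
          _ = u^2 := sq_abs u
      nlinarith [sq_abs u]
    calc ε * (u^2+ε^2) = ε * (Real.sqrt (u^2+ε^2) * Real.sqrt (u^2+ε^2)) := by
          rw [Real.mul_self_sqrt hpos.le]
      _ ≤ ε * ((2*|u|) * Real.sqrt (u^2+ε^2)) := by
          apply mul_le_mul_of_nonneg_left (mul_le_mul_of_nonneg_right key hs.le) hε.le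
      _ = 2 * ε * (|u| * Real.sqrt (u^2+ε^2)) := by ring
  · -- near case
    have : gSP ε u = 1 / ((u:ℂ) + ε * Complex.I) := by rw [gSP, if_neg h, sub_zero]
    rw [this, norm_div, norm_one, norm_denom]
    rw [div_le_div_iff₀ hs hpos]
    have key : Real.sqrt (u^2+ε^2) ≤ 2 * ε := by
      rw [show 2*ε = Real.sqrt ((2*ε)^2) from (Real.sqrt_sq (by positivity)).symm]
      apply Real.sqrt_le_sqrt
      have : u^2 ≤ ε^2 := by
        push_neg at h
        nlinarith [sq_abs u, abs_nonneg u]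
      nlinarith
    calc 1 * (u^2+ε^2) = Real.sqrt (u^2+ε^2) * Real.sqrt (u^2+ε^2) := by
          rw [Real.mul_self_sqrt hpos.le]; ring
      _ ≤ 2*ε*Real.sqrt (u^2+ε^2) := by nlinarith

lemma kernel_eq (c : ℝ) (hc : 0 < c) (u : ℝ) :
    c / (u^2 + c^2) = c⁻¹ * (1 + (u/c)^2)⁻¹ := by
  have h1 : u^2 + c^2 ≠ 0 := by positivity
  have h2 : (1 : ℝ) + (u/c)^2 ≠ 0 := by positivity
  field_simp
  ring

lemma integrable_kernel (c : ℝ) (hc : 0 < c) :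
    Integrable (fun u : ℝ => c / (u^2 + c^2)) := by
  have : Integrable (fun u : ℝ => (1 + (u/c)^2)⁻¹) := by
    have := integrable_inv_one_add_sq.comp_div (R := c) hc.ne'
    simpa using this
  have h2 := this.const_mul c⁻¹
  apply h2.congr
  filter_upwards with u
  rw [kernel_eq c hc u]

lemma integral_kernel (c : ℝ) (hc : 0 < c) :
    ∫ u : ℝ, c / (u^2 + c^2) = Real.pi := by
  simp_rw [fun u => kernel_eq c hc u]
  rw [integral_const_mul,
    MeasureTheory.Measure.integral_comp_div (fun v : ℝ => (1+v^2)⁻¹) c,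
    integral_univ_inv_one_add_sq, smul_eq_mul, abs_of_pos hc]
  field_simp

lemma measurable_gSP (ε : ℝ) : Measurable (gSP ε) := by
  unfold gSP
  apply Measurable.sub
  · exact (measurable_const.div ((Complex.measurable_ofReal).add_const _))
  · exact Measurable.ite (measurableSet_le measurable_const measurable_id'.abs)
      (measurable_const.div Complex.measurable_ofReal) measurable_const

lemma integrable_gSP {ε : ℝ} (hε : 0 < ε) : Integrable (gSP ε) := by
  apply Integrable.mono' ((integrable_kernel ε hε).const_mul 2) (measurable_gSP ε).aestronglyMeasurable
  filter_upwards with u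
  rw [show (2 : ℝ) * (ε / (u^2+ε^2)) = 2*ε/(u^2+ε^2) by ring]
  exact gSP_norm_le hε u

lemma one_div_denom {ε u : ℝ} (hε : 0 < ε) :
    (1 : ℂ) / ((u:ℂ) + ε * Complex.I) =
      ((u / (u^2+ε^2) : ℝ) : ℂ) + ((-ε/(u^2+ε^2) : ℝ) : ℂ) * Complex.I := by
  have hS : ((u:ℝ)^2 + ε^2 : ℝ) ≠ 0 := by positivity
  have hSC : ((u:ℂ)^2 + (ε:ℂ)^2) ≠ 0 := by
    have := Complex.ofReal_ne_zero.2 hS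
    push_cast at this
    exact this
  rw [div_eq_iff (denom_ne_zero hε u)]
  push_cast
  field_simp
  ring_nf
  rw [Complex.I_sq]
  field_simp [hSC]
  ring

noncomputable def fOdd (ε u : ℝ) : ℝ := u / (u^2+ε^2) - (if ε ≤ |u| then 1/u else 0)

lemma gSP_decomp {ε : ℝ} (hε : 0 < ε) (u : ℝ) :
    gSP ε u = ((fOdd ε u : ℝ) : ℂ) + ((-ε/(u^2+ε^2) : ℝ) : ℂ) * Complex.I := by
  rw [gSP, one_div_denom hε, fOdd]
  push_cast [apply_ite (fun r : ℝ => (r : ℂ))]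
  ring

lemma integral_fOdd {ε : ℝ} : ∫ u : ℝ, fOdd ε u = 0 := by
  have h : ∀ u : ℝ, fOdd ε (-u) = - fOdd ε u := by
    intro u
    rw [fOdd, fOdd, abs_neg]
    rcases le_or_gt ε |u| with h | h
    · rw [if_pos h, if_pos h]
      field_simp
      ring
    · rw [if_neg (not_le.2 h), if_neg (not_le.2 h)]
      field_simp
      ring
  have h2 : ∫ u : ℝ, fOdd ε u = ∫ u : ℝ, fOdd ε (-u) := (integral_neg_eq_self _ _).symm
  simp_rw [h, integral_neg] at h2
  linarith

lemma integral_gSP {ε : ℝ} (hε : 0 < ε) :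
    ∫ u : ℝ, gSP ε u = -Real.pi * Complex.I := by
  have hmf : Measurable (fun u => fOdd ε u) := by
    unfold fOdd
    apply Measurable.sub
    · exact measurable_id.div ((measurable_id.pow_const 2).add_const _)
    · exact Measurable.ite (measurableSet_le measurable_const measurable_id'.abs)
        (measurable_const.div measurable_id) measurable_const
  have hre : Integrable (fun u => fOdd ε u) := by
    apply Integrable.mono' ((integrable_kernel ε hε).const_mul 2) hmf.aestronglyMeasurable
    filter_upwards with u
    have h1 : fOdd ε u = (gSP ε u).re := by
      rw [gSP_decomp hε u, Complex.add_re, Complex.ofReal_re, Complex.mul_re,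
        Complex.ofReal_re, Complex.ofReal_im, Complex.I_re, Complex.I_im]
      ring
    rw [Real.norm_eq_abs, h1, show (2 : ℝ) * (ε / (u^2+ε^2)) = 2*ε/(u^2+ε^2) by ring]
    exact le_trans (Complex.abs_re_le_norm _) (gSP_norm_le hε u)
  have him : Integrable (fun u : ℝ => -ε/(u^2+ε^2)) := by
    have := (integrable_kernel ε hε).neg
    apply this.congr
    filter_upwards with u
    simp [neg_div]
  have e1 : ∫ u : ℝ, gSP ε u
      = ∫ u : ℝ, (((fOdd ε u : ℝ) : ℂ) + ((-ε/(u^2+ε^2) : ℝ) : ℂ) * Complex.I) :=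
    integral_congr_ae (by filter_upwards with u; rw [gSP_decomp hε u])
  have i1 : Integrable (fun u : ℝ => ((fOdd ε u : ℝ) : ℂ)) := by exact hre.ofReal
  have i2 : Integrable (fun u : ℝ => ((-ε/(u^2+ε^2) : ℝ) : ℂ) * Complex.I) := by
    exact him.ofReal.mul_const Complex.I
  have e2 := integral_add (μ := (volume : Measure ℝ)) i1 i2
  have e3 : ∫ u : ℝ, ((fOdd ε u : ℝ) : ℂ) = ((0 : ℝ) : ℂ) := by
    have : ∫ u : ℝ, ((fOdd ε u : ℝ) : ℂ) = ((∫ u : ℝ, fOdd ε u : ℝ) : ℂ) := integral_ofReal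
    rw [this, integral_fOdd]
  have e4 : ∫ u : ℝ, ((-ε/(u^2+ε^2) : ℝ) : ℂ) * Complex.I
      = ((-Real.pi : ℝ) : ℂ) * Complex.I := by
    rw [integral_mul_const]
    congr 1
    have : ∫ u : ℝ, ((-ε/(u^2+ε^2) : ℝ) : ℂ) = ((∫ u : ℝ, -ε/(u^2+ε^2) : ℝ) : ℂ) :=
      integral_ofReal
    rw [this]
    congr 1
    simp_rw [neg_div]
    rw [integral_neg, integral_kernel ε hε]
  exact e1.trans (e2.trans (by rw [e3, e4]; push_cast; ring))
lemma integrable_gSP_comp {ε : ℝ} (hε : 0 < ε) (x : ℝ) :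
    Integrable (fun y => gSP ε (x - y)) := (integrable_gSP hε).comp_sub_left x

lemma integrable_rho_gSP {ρ : ℝ → ℝ} (hint : Integrable ρ (volume : Measure ℝ))
    {ε : ℝ} (hε : 0 < ε) (x : ℝ) :
    Integrable (fun y => ((ρ y : ℝ) : ℂ) * gSP ε (x - y)) := by
  apply Integrable.mono' ((hint.norm).const_mul (2/ε))
  · apply AEStronglyMeasurable.mul
    · exact Complex.continuous_ofReal.comp_aestronglyMeasurable hint.aestronglyMeasurable
    · exact ((measurable_gSP ε).comp (measurable_const.sub measurable_id)).aestronglyMeasurable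
  · filter_upwards with y
    rw [norm_mul, Complex.norm_real, Real.norm_eq_abs]
    have h1 : ‖gSP ε (x - y)‖ ≤ 2/ε := by
      refine le_trans (gSP_norm_le hε (x-y)) ?_
      rw [div_le_div_iff₀ (by positivity) hε]
      nlinarith [sq_nonneg (x-y), sq_nonneg ε]
    calc |ρ y| * ‖gSP ε (x-y)‖ ≤ |ρ y| * (2/ε) :=
          mul_le_mul_of_nonneg_left h1 (abs_nonneg _)
      _ = 2/ε * ‖ρ y‖ := by rw [Real.norm_eq_abs]; ring

lemma integrable_sub_rho_gSP {ρ : ℝ → ℝ} (hint : Integrable ρ (volume : Measure ℝ))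
    {ε : ℝ} (hε : 0 < ε) (x : ℝ) (c : ℝ) :
    Integrable (fun y => ((ρ y - c : ℝ) : ℂ) * gSP ε (x - y)) := by
  have h := (integrable_rho_gSP hint hε x).sub
    (((integrable_gSP_comp hε x).const_mul (c : ℂ)))
  apply h.congr
  filter_upwards with y
  simp only [Pi.sub_apply]
  push_cast
  ring

set_option maxHeartbeats 1600000 in
lemma tendsto_A {ρ : ℝ → ℝ} (hpos : ∀ x, 0 ≤ ρ x)
    (hint : Integrable ρ (volume : Measure ℝ))
    (x : ℝ) (hcont : ContinuousAt ρ x) :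
    Tendsto (fun ε : ℝ => ∫ y : ℝ, ((ρ y : ℝ) : ℂ) * gSP ε (x - y))
      (nhdsWithin 0 (Set.Ioi 0)) (nhds (-(Real.pi * ρ x) * Complex.I)) := by
  rw [Metric.tendsto_nhdsWithin_nhds]
  intro η hη
  have hπ := Real.pi_pos
  set η₁ := η / (4 * Real.pi + 1) with hη₁def
  have hη₁ : 0 < η₁ := by positivity
  obtain ⟨δ, hδ, hδc⟩ := Metric.continuousAt_iff.1 hcont η₁ hη₁
  set C := ∫ y : ℝ, ρ y with hCdef
  have hC0 : 0 ≤ C := integral_nonneg hpos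
  have hρx := hpos x
  set K := 4 * C / δ^2 + ρ x * 4 * Real.pi / δ with hKdef
  have hK0 : 0 ≤ K := by positivity
  clear_value η₁ C K
  refine ⟨min δ (η / 2 / (K + 1)), by positivity, ?_⟩
  intro ε hεmem hεd
  have hε0 : 0 < ε := hεmem
  rw [Real.dist_eq, sub_zero, abs_of_pos hε0, lt_min_iff] at hεd
  obtain ⟨hεδ, hεK⟩ := hεd
  -- the constant integral
  have hconst : ∫ y : ℝ, ((ρ x : ℝ) : ℂ) * gSP ε (x - y)
      = (ρ x : ℂ) * (-Real.pi * Complex.I) := by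
    rw [integral_const_mul]
    have h := integral_sub_left_eq_self (gSP ε) volume x
    rw [integral_gSP hε0] at h
    rw [h]
  -- key difference identity
  have keyeq : (∫ y : ℝ, ((ρ y : ℝ) : ℂ) * gSP ε (x - y)) - (-(Real.pi * ρ x) * Complex.I)
      = ∫ y : ℝ, ((ρ y - ρ x : ℝ) : ℂ) * gSP ε (x - y) := by
    have h2 : (-(Real.pi * ρ x) * Complex.I : ℂ)
        = ∫ y : ℝ, ((ρ x : ℝ) : ℂ) * gSP ε (x - y) := by
      rw [hconst]; push_cast; ring
    rw [h2, ← integral_sub (integrable_rho_gSP hint hε0 x)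
      ((integrable_gSP_comp hε0 x).const_mul _)]
    apply integral_congr_ae
    filter_upwards with y
    push_cast
    ring
  -- the bound function
  have t1 : Integrable (fun y : ℝ => η₁ * 2 * (ε / ((x - y)^2 + ε^2))) :=
    ((integrable_kernel ε hε0).comp_sub_left x).const_mul _
  have t2 : Integrable (fun y : ℝ => 4 * ε / δ^2 * ρ y) := hint.const_mul _
  have t3 : Integrable (fun y : ℝ => ρ x * 4 * (ε / δ) * (δ / ((x - y)^2 + δ^2))) :=
    ((integrable_kernel δ hδ).comp_sub_left x).const_mul _
  have t12 : Integrable (fun y : ℝ => η₁ * 2 * (ε / ((x - y)^2 + ε^2)) + 4 * ε / δ^2 * ρ y) := by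
    exact t1.add t2
  have hB : Integrable (fun y : ℝ => η₁ * 2 * (ε / ((x - y)^2 + ε^2)) + 4 * ε / δ^2 * ρ y
      + ρ x * 4 * (ε / δ) * (δ / ((x - y)^2 + δ^2))) := by exact t12.add t3
  -- pointwise bound
  have hpt : ∀ y : ℝ, ‖((ρ y - ρ x : ℝ) : ℂ) * gSP ε (x - y)‖
      ≤ η₁ * 2 * (ε / ((x - y)^2 + ε^2)) + 4 * ε / δ^2 * ρ y
        + ρ x * 4 * (ε / δ) * (δ / ((x - y)^2 + δ^2)) := by
    intro y
    have hg := gSP_norm_le hε0 (x - y)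
    have hSε : (0:ℝ) < (x - y)^2 + ε^2 := by positivity
    have hSδ : (0:ℝ) < (x - y)^2 + δ^2 := by positivity
    rw [norm_mul, Complex.norm_real, Real.norm_eq_abs]
    have ht1nn : 0 ≤ η₁ * 2 * (ε / ((x - y)^2 + ε^2)) := by positivity
    have hρy := hpos y
    have ht2nn : 0 ≤ 4 * ε / δ^2 * ρ y := by positivity
    have ht3nn : 0 ≤ ρ x * 4 * (ε / δ) * (δ / ((x - y)^2 + δ^2)) := by positivity
    by_cases hy : dist y x < δ
    · have hnear : |ρ y - ρ x| ≤ η₁ := le_of_lt (by rw [← Real.dist_eq]; exact hδc hy)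
      have hh : |ρ y - ρ x| * ‖gSP ε (x - y)‖ ≤ η₁ * (2 * ε / ((x - y)^2 + ε^2)) :=
        mul_le_mul hnear hg (norm_nonneg _) hη₁.le
      have heq : η₁ * (2 * ε / ((x - y)^2 + ε^2)) = η₁ * 2 * (ε / ((x - y)^2 + ε^2)) := by
        ring
      rw [heq] at hh
      linarith
    · push_neg at hy
      rw [Real.dist_eq] at hy
      have habs : δ ≤ |x - y| := by
        calc δ ≤ |y - x| := hy
          _ = |x - y| := abs_sub_comm y x
      have hu2 : δ^2 ≤ (x - y)^2 := by nlinarith [sq_abs (x - y), abs_nonneg (x - y)]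
      have hg2 : ‖gSP ε (x - y)‖ ≤ 4 * ε / ((x - y)^2 + δ^2) := by
        refine le_trans hg ?_
        rw [div_le_div_iff₀ hSε hSδ]
        nlinarith [sq_nonneg ε]
      have habs2 : |ρ y - ρ x| ≤ ρ y + ρ x := by
        have h : |ρ y - ρ x| ≤ |ρ y| + |ρ x| := by
          calc |ρ y - ρ x| = |ρ y + -ρ x| := by rw [sub_eq_add_neg]
            _ ≤ |ρ y| + |-ρ x| := abs_add_le _ _
            _ = |ρ y| + |ρ x| := by rw [abs_neg]
        rwa [abs_of_nonneg (hpos y), abs_of_nonneg (hpos x)] at h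
      have hsum : |ρ y - ρ x| * ‖gSP ε (x - y)‖
          ≤ (ρ y + ρ x) * (4 * ε / ((x - y)^2 + δ^2)) :=
        mul_le_mul habs2 hg2 (norm_nonneg _) (by linarith)
      have hsplit : (ρ y + ρ x) * (4 * ε / ((x - y)^2 + δ^2))
          = ρ y * (4 * ε / ((x - y)^2 + δ^2))
            + ρ x * 4 * (ε / δ) * (δ / ((x - y)^2 + δ^2)) := by
        field_simp
      have hkey : ρ y * (4 * ε / ((x - y)^2 + δ^2)) ≤ 4 * ε / δ^2 * ρ y := by
        rw [mul_comm]
        apply mul_le_mul_of_nonneg_right _ (hpos y)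
        rw [div_le_div_iff₀ hSδ (by positivity)]
        nlinarith [hε0.le]
      rw [hsplit] at hsum
      linarith
  -- kernel integrals
  have k1 : ∫ y : ℝ, ε / ((x - y)^2 + ε^2) = Real.pi := by
    have h := integral_sub_left_eq_self (fun u : ℝ => ε / (u^2 + ε^2)) volume x
    rw [integral_kernel ε hε0] at h
    exact h
  have k2 : ∫ y : ℝ, δ / ((x - y)^2 + δ^2) = Real.pi := by
    have h := integral_sub_left_eq_self (fun u : ℝ => δ / (u^2 + δ^2)) volume x
    rw [integral_kernel δ hδ] at h
    exact h
  have iB : ∫ y : ℝ, (η₁ * 2 * (ε / ((x - y)^2 + ε^2)) + 4 * ε / δ^2 * ρ y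
      + ρ x * 4 * (ε / δ) * (δ / ((x - y)^2 + δ^2)))
      = η₁ * 2 * Real.pi + 4 * ε / δ^2 * C + ρ x * 4 * (ε / δ) * Real.pi := by
    rw [integral_add t12 t3, integral_add t1 t2,
      integral_const_mul, integral_const_mul, integral_const_mul, k1, k2, hCdef]
  -- final bound
  have hnorm : dist (∫ y : ℝ, ((ρ y : ℝ) : ℂ) * gSP ε (x - y))
      (-(Real.pi * ρ x) * Complex.I)
      ≤ ∫ y : ℝ, (η₁ * 2 * (ε / ((x - y)^2 + ε^2)) + 4 * ε / δ^2 * ρ y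
        + ρ x * 4 * (ε / δ) * (δ / ((x - y)^2 + δ^2))) := by
    rw [dist_eq_norm, keyeq]
    exact norm_integral_le_of_norm_le hB (Eventually.of_forall hpt)
  have h1 : η₁ * 2 * Real.pi < η / 2 := by
    rw [hη₁def, div_mul_eq_mul_div, div_mul_eq_mul_div,
      div_lt_div_iff₀ (by positivity) (by norm_num)]
    nlinarith
  have h2 : 4 * ε / δ^2 * C + ρ x * 4 * (ε / δ) * Real.pi = ε * K := by
    rw [hKdef]
    field_simp
  have h3 : ε * K < η / 2 := by
    rw [lt_div_iff₀ (by positivity : (0:ℝ) < K + 1)] at hεK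
    nlinarith
  calc dist (∫ y : ℝ, ((ρ y : ℝ) : ℂ) * gSP ε (x - y)) (-(Real.pi * ρ x) * Complex.I)
      ≤ ∫ y : ℝ, (η₁ * 2 * (ε / ((x - y)^2 + ε^2)) + 4 * ε / δ^2 * ρ y
        + ρ x * 4 * (ε / δ) * (δ / ((x - y)^2 + δ^2))) := hnorm
    _ = η₁ * 2 * Real.pi + (4 * ε / δ^2 * C + ρ x * 4 * (ε / δ) * Real.pi) := by
        rw [iB]; ring
    _ < η := by rw [h2]; linarith

lemma integrable_ind {ρ : ℝ → ℝ} (hpos : ∀ x, 0 ≤ ρ x)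
    (hint : Integrable ρ (volume : Measure ℝ)) {ε : ℝ} (hε : 0 < ε) (x : ℝ) :
    Integrable (fun y => ({y : ℝ | ε ≤ |x - y|}).indicator (fun y => ρ y / (x - y)) y) := by
  have hS : MeasurableSet {y : ℝ | ε ≤ |x - y|} :=
    measurableSet_le measurable_const ((measurable_const.sub measurable_id).abs)
  apply Integrable.mono' (hint.norm.const_mul (1/ε))
  · apply AEStronglyMeasurable.indicator _ hS
    have hm : AEStronglyMeasurable (fun y : ℝ => ρ y * (x - y)⁻¹) volume := by
      exact hint.aestronglyMeasurable.mul
        ((measurable_const.sub measurable_id).inv.aestronglyMeasurable)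
    exact hm.congr (by filter_upwards with y; rw [← div_eq_mul_inv])
  · filter_upwards with y
    rw [Real.norm_eq_abs, Set.indicator_apply]
    by_cases h : y ∈ {y : ℝ | ε ≤ |x - y|}
    · rw [if_pos h]
      have hxy : ε ≤ |x - y| := h
      have hxy0 : (0:ℝ) < |x - y| := lt_of_lt_of_le hε hxy
      rw [abs_div]
      calc |ρ y| / |x - y| ≤ |ρ y| / ε := by
            apply div_le_div_of_nonneg_left (abs_nonneg _) hε hxy
        _ = 1/ε * ‖ρ y‖ := by rw [Real.norm_eq_abs]; ring
    · rw [if_neg h]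
      simp only [abs_zero]
      positivity

/-- Sokhotski–Plemelj formula (approach from the upper half-plane): for a nonnegative
integrable density `ρ` continuous at `x` whose Hilbert transform exists at `x`,
`lim_{ε↓0} (1/π) G(x + iε) = H[ρ](x) − i ρ(x)`, where
`G(z) = ∫ ρ(y)/(z−y) dy` is the Stieltjes transform. -/
theorem sokhotski_plemelj_upper (ρ : ℝ → ℝ) (hpos : ∀ x, 0 ≤ ρ x)
    (hint : Integrable ρ (volume : Measure ℝ))
    (x : ℝ) (hcont : ContinuousAt ρ x) (Hx : ℝ)
    (hH : Tendsto (fun ε : ℝ => ∫ y in {y : ℝ | ε ≤ |x - y|}, ρ y / (x - y))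
      (nhdsWithin 0 (Set.Ioi 0)) (nhds (Real.pi * Hx))) :
    Tendsto
      (fun ε : ℝ => (1 / (Real.pi : ℂ)) *
        ∫ y : ℝ, (ρ y : ℂ) / (((x : ℂ) + Complex.I * ε) - y))
      (nhdsWithin 0 (Set.Ioi 0))
      (nhds ((Hx : ℂ) - Complex.I * (ρ x : ℂ))) := by
  have hπ := Real.pi_pos
  have hπC : (Real.pi : ℂ) ≠ 0 := by exact_mod_cast Real.pi_ne_zero
  have hS : ∀ ε : ℝ, MeasurableSet {y : ℝ | ε ≤ |x - y|} := fun ε =>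
    measurableSet_le measurable_const ((measurable_const.sub measurable_id).abs)
  -- eventual decomposition
  have hev : ∀ᶠ ε : ℝ in nhdsWithin (0:ℝ) (Set.Ioi 0),
      (1 / (Real.pi : ℂ)) * ∫ y : ℝ, (ρ y : ℂ) / (((x : ℂ) + Complex.I * ε) - y)
      = (1 / (Real.pi : ℂ)) *
        (((∫ y in {y : ℝ | ε ≤ |x - y|}, ρ y / (x - y) : ℝ) : ℂ)
          + ∫ y : ℝ, ((ρ y : ℝ) : ℂ) * gSP ε (x - y)) := by
    filter_upwards [self_mem_nhdsWithin] with ε hεmem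
    have hε : (0:ℝ) < ε := hεmem
    congr 1
    have i1 : Integrable (fun y : ℝ =>
        ((({y : ℝ | ε ≤ |x - y|}).indicator (fun y => ρ y / (x - y)) y : ℝ) : ℂ)) := by
      exact (integrable_ind hpos hint hε x).ofReal
    have i2 := integrable_rho_gSP hint hε x
    have hpw : ∀ y : ℝ, (ρ y : ℂ) / (((x : ℂ) + Complex.I * ε) - y)
        = ((({y : ℝ | ε ≤ |x - y|}).indicator (fun y => ρ y / (x - y)) y : ℝ) : ℂ)
          + ((ρ y : ℝ) : ℂ) * gSP ε (x - y) := by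
      intro y
      have hden : (((x:ℝ) - y : ℝ) : ℂ) + ε * Complex.I ≠ 0 := denom_ne_zero hε (x - y)
      have hden2 : ((x : ℂ) + Complex.I * ε) - y = (((x:ℝ) - y : ℝ) : ℂ) + ε * Complex.I := by
        push_cast; ring
      rw [hden2, gSP, Set.indicator_apply]
      by_cases h : y ∈ {y : ℝ | ε ≤ |x - y|}
      · have hxy : ε ≤ |x - y| := h
        have hxy0 : x - y ≠ 0 := by
          intro h0; rw [h0] at hxy; simp at hxy; linarith
        have hxyC : (((x:ℝ) - y : ℝ) : ℂ) ≠ 0 := Complex.ofReal_ne_zero.2 hxy0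
        rw [if_pos h, if_pos hxy]
        push_cast at hden hxyC ⊢
        field_simp
        ring
      · have hxy : ¬ (ε ≤ |x - y|) := h
        rw [if_neg h, if_neg hxy]
        push_cast
        ring
    calc ∫ y : ℝ, (ρ y : ℂ) / (((x : ℂ) + Complex.I * ε) - y)
        = ∫ y : ℝ, (((({y : ℝ | ε ≤ |x - y|}).indicator (fun y => ρ y / (x - y)) y : ℝ) : ℂ)
            + ((ρ y : ℝ) : ℂ) * gSP ε (x - y)) :=
          integral_congr_ae (Eventually.of_forall hpw)
      _ = (∫ y : ℝ, ((({y : ℝ | ε ≤ |x - y|}).indicator (fun y => ρ y / (x - y)) y : ℝ) : ℂ))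
            + ∫ y : ℝ, ((ρ y : ℝ) : ℂ) * gSP ε (x - y) := integral_add i1 i2
      _ = ((∫ y in {y : ℝ | ε ≤ |x - y|}, ρ y / (x - y) : ℝ) : ℂ)
            + ∫ y : ℝ, ((ρ y : ℝ) : ℂ) * gSP ε (x - y) := by
          congr 1
          have e1 : ∫ y : ℝ, ((({y : ℝ | ε ≤ |x - y|}).indicator (fun y => ρ y / (x - y)) y : ℝ) : ℂ)
              = ((∫ y : ℝ, ({y : ℝ | ε ≤ |x - y|}).indicator (fun y => ρ y / (x - y)) y : ℝ) : ℂ) :=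
            integral_ofReal
          rw [e1, integral_indicator (hS ε)]
  -- limits
  have hT : Tendsto (fun ε : ℝ =>
      ((∫ y in {y : ℝ | ε ≤ |x - y|}, ρ y / (x - y) : ℝ) : ℂ))
      (nhdsWithin 0 (Set.Ioi 0)) (nhds ((Real.pi * Hx : ℝ) : ℂ)) :=
    (Complex.continuous_ofReal.tendsto _).comp hH
  have hA := tendsto_A hpos hint x hcont
  have hsum := (hT.add hA).const_mul (1 / (Real.pi : ℂ))
  have hval : (1 / (Real.pi : ℂ)) * (((Real.pi * Hx : ℝ) : ℂ) + -(Real.pi * ρ x) * Complex.I)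
      = (Hx : ℂ) - Complex.I * (ρ x : ℂ) := by
    push_cast
    field_simp
    ring
  rw [hval] at hsum
  exact Tendsto.congr' (EventuallyEq.symm hev) hsum
end

section
/- At t = 1 the two-source density is given, for 0 < |x| < 3√3/2, by ρ(1,x) = (3/(4π))·(2|x|/(3√3))^{1/3}·[(1+√(1−4x²/27))^{2/3} − (1−√(1−4x²/27))^{2/3}], and this function behaves asymptotically as (√3/(2π))|x|^{1/3} as x → 0. -/
open Filter Set

/-- The explicit two-source density at time `t = 1`:
`ρ(1,x) = (3/(4π))·(2|x|/(3√3))^{1/3}·[(1+√(1−4x²/27))^{2/3} − (1−√(1−4x²/27))^{2/3}]`. -/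
noncomputable def ρtwo (x : ℝ) : ℝ :=
  (3 / (4 * Real.pi)) * (2 * |x| / (3 * Real.sqrt 3)) ^ ((1 : ℝ) / 3) *
    ((1 + Real.sqrt (1 - 4 * x ^ 2 / 27)) ^ ((2 : ℝ) / 3)
      - (1 - Real.sqrt (1 - 4 * x ^ 2 / 27)) ^ ((2 : ℝ) / 3))

lemma rpow_third_cube {t : ℝ} (ht : 0 ≤ t) : (t ^ ((1:ℝ)/3))^3 = t := by
  rw [← Real.rpow_natCast (t ^ ((1:ℝ)/3)) 3, ← Real.rpow_mul ht]; norm_num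

lemma rpow_twothird_cube {t : ℝ} (ht : 0 ≤ t) : (t ^ ((2:ℝ)/3))^3 = t^2 := by
  rw [← Real.rpow_natCast (t ^ ((2:ℝ)/3)) 3, ← Real.rpow_mul ht]; norm_num

lemma cube_inj {a b : ℝ} (ha : 0 ≤ a) (hb : 0 ≤ b) (h : a^3 = b^3) : a = b :=
  (pow_left_strictMonoOn₀ three_ne_zero).injOn ha hb h

set_option maxHeartbeats 1000000 in
lemma cardano_pos (x : ℝ) (hx : 0 < x) (hx' : x < 3 * Real.sqrt 3 / 2) :
    ∃ r a β : ℝ, 0 < β ∧ Real.pi * ρtwo x = β ∧ x < r ∧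
      ∀ W : ℂ, W^3 - 2*x*W^2 + x^2*W - x
        = (W - r) * (W - (a + β*Complex.I)) * (W - (a - β*Complex.I)) := by
  have h3 : Real.sqrt 3 ^ 2 = 3 := Real.sq_sqrt (by norm_num)
  have hx27 : 4 * x^2 / 27 < 1 := by nlinarith [Real.sqrt_nonneg 3]
  set s : ℝ := Real.sqrt (1 - 4 * x^2 / 27) with hs
  have hs2 : s^2 = 1 - 4 * x^2 / 27 := Real.sq_sqrt (by linarith)
  have hs0 : 0 < s := Real.sqrt_pos.mpr (by linarith)
  have hs1 : s < 1 := by nlinarith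
  set A : ℝ := (x/4) ^ ((1:ℝ)/3) * (1 + s) ^ ((2:ℝ)/3) with hA
  set B : ℝ := (x/4) ^ ((1:ℝ)/3) * (1 - s) ^ ((2:ℝ)/3) with hB
  have hx4 : (0:ℝ) ≤ x/4 := by linarith
  have hA3 : A^3 = (x/4) * (1+s)^2 := by
    rw [hA, mul_pow, rpow_third_cube hx4, rpow_twothird_cube (by linarith)]
  have hB3 : B^3 = (x/4) * (1-s)^2 := by
    rw [hB, mul_pow, rpow_third_cube hx4, rpow_twothird_cube (by linarith)]
  have hApos : 0 < A := by
    apply mul_pos <;> apply Real.rpow_pos_of_pos <;> linarith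
  have hBpos : 0 < B := by
    apply mul_pos <;> apply Real.rpow_pos_of_pos <;> linarith
  have hAB : A * B = x^2 / 9 := by
    apply cube_inj (by positivity) (by positivity)
    rw [mul_pow, hA3, hB3]
    linear_combination (-(x^2/16) * (1 - s^2 + 4*x^2/27)) * hs2
  have hABgt : A > B := by
    rw [hA, hB]
    apply mul_lt_mul_of_pos_left _ (Real.rpow_pos_of_pos (by linarith) _)
    exact Real.rpow_lt_rpow (by linarith) (by linarith) (by norm_num)
  refine ⟨A + B + 2*x/3, 2*x/3 - (A+B)/2, Real.sqrt 3 / 2 * (A - B), ?_, ?_, ?_, ?_⟩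
  · have := Real.sqrt_pos.mpr (show (0:ℝ) < 3 by norm_num)
    nlinarith
  · -- π * ρtwo x = √3/2 * (A - B)
    have hxabs : |x| = x := abs_of_pos hx
    have h30 : Real.sqrt 3 > 0 := Real.sqrt_pos.mpr (by norm_num)
    have hc : (3:ℝ)/4 * (2*x/(3*Real.sqrt 3)) ^ ((1:ℝ)/3)
        = Real.sqrt 3 / 2 * (x/4) ^ ((1:ℝ)/3) := by
      apply cube_inj (by positivity) (by positivity)
      rw [mul_pow, mul_pow, rpow_third_cube (by positivity), rpow_third_cube hx4]
      have h34 : Real.sqrt 3 ^ 4 = 9 := by nlinarith [h3]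
      field_simp
      ring_nf
      nlinarith [h34]
    have hpi : Real.pi ≠ 0 := Real.pi_ne_zero
    have hπ : Real.pi * (3 / (4*Real.pi)) = 3/4 := by field_simp
    simp only [ρtwo, hxabs, ← hs, hA, hB]
    calc Real.pi * (3 / (4 * Real.pi) * (2 * x / (3 * Real.sqrt 3)) ^ ((1:ℝ)/3) *
          ((1 + s) ^ ((2:ℝ)/3) - (1 - s) ^ ((2:ℝ)/3)))
        = (Real.pi * (3 / (4*Real.pi))) * ((2 * x / (3 * Real.sqrt 3)) ^ ((1:ℝ)/3) *
          ((1 + s) ^ ((2:ℝ)/3) - (1 - s) ^ ((2:ℝ)/3))) := by ring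
      _ = (3/4 * (2 * x / (3 * Real.sqrt 3)) ^ ((1:ℝ)/3)) *
          ((1 + s) ^ ((2:ℝ)/3) - (1 - s) ^ ((2:ℝ)/3)) := by rw [hπ]; ring
      _ = (Real.sqrt 3 / 2 * (x/4) ^ ((1:ℝ)/3)) *
          ((1 + s) ^ ((2:ℝ)/3) - (1 - s) ^ ((2:ℝ)/3)) := by rw [hc]
      _ = Real.sqrt 3 / 2 * ((x/4) ^ ((1:ℝ)/3) * (1 + s) ^ ((2:ℝ)/3)
          - (x/4) ^ ((1:ℝ)/3) * (1 - s) ^ ((2:ℝ)/3)) := by ring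
  · -- x < A + B + 2x/3  using A + B ≥ 2√(AB) = 2x/3
    have hAM : A + B ≥ 2*x/3 := by nlinarith [sq_nonneg (A - B), hAB]
    linarith
  · intro W
    have e2 : 2 * (2*x/3 - (A+B)/2) * (A + B + 2*x/3)
        + ((2*x/3 - (A+B)/2)^2 + (Real.sqrt 3 / 2 * (A - B))^2) = x^2 := by
      linear_combination ((A-B)^2/4) * h3 + (-3) * hAB
    have e3 : (A + B + 2*x/3) * ((2*x/3 - (A+B)/2)^2 + (Real.sqrt 3 / 2 * (A - B))^2)
        = x := by
      linear_combination ((A+B+2*x/3) * (A-B)^2/4) * h3 + hA3 + hB3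
        + (-2*x) * hAB + (x/2) * hs2
    have e2' := congrArg Complex.ofReal e2
    have e3' := congrArg Complex.ofReal e3
    push_cast at e2' e3' ⊢
    linear_combination (-W) * e2' + e3'
      + ((Real.sqrt 3 : ℂ) / 2 * ((A:ℂ) - (B:ℂ)))^2 * (W - ((A:ℂ) + (B:ℂ) + 2*(x:ℂ)/3)) * Complex.I_sq

lemma ρtwo_neg (x : ℝ) : ρtwo (-x) = ρtwo x := by
  simp [ρtwo, abs_neg, neg_sq]

lemma cardano' (x : ℝ) (hx : 0 < |x|) (hx' : |x| < 3 * Real.sqrt 3 / 2) :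
    ∃ r a β : ℝ, 0 < β ∧ Real.pi * ρtwo x = β ∧ 0 < 2*r^2 - 2*x*r + 1 ∧
      ∀ W : ℂ, W^3 - 2*x*W^2 + x^2*W - x
        = (W - r) * (W - (a + β*Complex.I)) * (W - (a - β*Complex.I)) := by
  rcases lt_or_gt_of_ne (fun h => by simp [h] at hx : x ≠ 0) with hneg | hpos
  · have habs : |x| = -x := abs_of_neg hneg
    obtain ⟨r, a, β, hβ, hρ, hr, hfac⟩ :=
      cardano_pos (-x) (by linarith [habs ▸ hx]) (by linarith [habs ▸ hx'])
    refine ⟨-r, -a, β, hβ, by rw [← ρtwo_neg x]; exact hρ, by nlinarith, ?_⟩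
    intro W
    have h := hfac (-W)
    push_cast at h ⊢
    linear_combination -h
  · have habs : |x| = x := abs_of_pos hpos
    obtain ⟨r, a, β, hβ, hρ, hr, hfac⟩ := cardano_pos x hpos (habs ▸ hx')
    exact ⟨r, a, β, hβ, hρ, by nlinarith, hfac⟩

set_option maxHeartbeats 1600000 in
lemma density_eq (G : ℂ → ℂ) (ρ : ℝ → ℝ)
    (hcubic : ∀ z : ℂ, z.im ≠ 0 →
      (G z) ^ 3 - 2 * z * (G z) ^ 2 + z ^ 2 * G z - z = 0)
    (hbranch : ∀ z : ℂ, 0 < z.im → (G z).im < 0)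
    (hρ : ∀ x : ℝ, Tendsto
      (fun ε : ℝ => -(1 / Real.pi) * (G ((x : ℂ) + Complex.I * ε)).im)
      (nhdsWithin 0 (Set.Ioi 0)) (nhds (ρ x)))
    (x : ℝ) (hx0 : 0 < |x|) (hx3 : |x| < 3 * Real.sqrt 3 / 2) : ρ x = ρtwo x := by
  obtain ⟨r, a, β, hβ, hβρ, hk, hfac⟩ := cardano' x hx0 hx3
  set l : Filter ℝ := nhdsWithin 0 (Set.Ioi 0) with hl
  set w : ℝ → ℂ := fun ε => G ((x : ℂ) + Complex.I * ε) with hw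
  set c1 : ℂ := (a : ℂ) + (β:ℂ)*Complex.I with hc1
  set c2 : ℂ := (a : ℂ) - (β:ℂ)*Complex.I with hc2
  set M : ℝ := 2*|x| + 4 with hM
  set Q : ℝ := 2*M^2 + 2*M*|x| + 1 + M with hQ
  have hM4 : 4 ≤ M := by rw [hM]; linarith [abs_nonneg x]
  have hMpos : 0 < M := by linarith
  have hQpos : 0 < Q := by rw [hQ]; positivity
  have hzim : ∀ ε : ℝ, ((x:ℂ) + Complex.I * ε).im = ε := by intro ε; simp
  -- key algebraic identity along the approach
  have hroot : ∀ ε : ℝ, 0 < ε →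
      (w ε - r) * ((w ε - c1) * (w ε - c2)) =
        Complex.I*(ε:ℂ)*(2*(w ε)^2 + 1 - 2*(w ε)*x) + (ε:ℂ)^2 * (w ε) := by
    intro ε hε
    have hz : ((x:ℂ) + Complex.I*ε).im ≠ 0 := by rw [hzim]; exact hε.ne'
    have hc := hcubic _ hz
    have hf := hfac (w ε)
    rw [hc1, hc2]
    rw [show (w ε - ↑r) * ((w ε - (↑a + ↑β * Complex.I)) * (w ε - (↑a - ↑β * Complex.I)))
      = (w ε - ↑r) * (w ε - (↑a + ↑β * Complex.I)) * (w ε - (↑a - ↑β * Complex.I)) by ring, ← hf]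
    linear_combination hc - (ε:ℂ)^2 * (w ε) * Complex.I_sq
  -- boundedness
  have hbound : ∀ ε : ℝ, 0 < ε → ε ≤ 1 → ‖w ε‖ ≤ M := by
    intro ε h1 h2
    by_contra hMc; push_neg at hMc
    have hz : ((x:ℂ) + Complex.I*ε).im ≠ 0 := by rw [hzim]; exact h1.ne'
    have hc := hcubic _ hz
    have hwz : (w ε) * ((w ε) - ((x:ℂ)+Complex.I*ε))^2 = (x:ℂ)+Complex.I*ε := by
      linear_combination hc
    have habsz : ‖(x:ℂ)+Complex.I*ε‖ ≤ |x| + 1 := by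
      refine le_trans (norm_add_le _ _) ?_
      rw [norm_mul]
      simp [Complex.norm_real, Real.norm_eq_abs, abs_of_pos h1]
      linarith
    have h1' : |x| + 3 ≤ ‖(w ε) - ((x:ℂ)+Complex.I*ε)‖ := by
      have := norm_sub_norm_le (w ε) ((x:ℂ)+Complex.I*ε)
      rw [hM] at hMc
      linarith
    have := congrArg norm hwz
    rw [norm_mul, norm_pow] at this
    nlinarith [norm_nonneg (w ε), abs_nonneg x]
  -- limit of imaginary part
  have hL : Tendsto (fun ε => (w ε).im) l (nhds (-Real.pi * ρ x)) := by
    have h2 := (hρ x).const_mul (-Real.pi)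
    refine h2.congr (fun ε => ?_)
    have : Real.pi ≠ 0 := Real.pi_ne_zero
    field_simp
    rfl
  have hIm_neg : ∀ ε : ℝ, 0 < ε → (w ε).im < 0 := fun ε hε =>
    hbranch _ (by rw [hzim]; exact hε)
  set L : ℝ := -Real.pi * ρ x with hLdef
  have hLle : L ≤ 0 :=
    le_of_tendsto hL (eventually_nhdsWithin_of_forall (fun ε hε => (hIm_neg ε hε).le))
  -- bound on the RHS of hroot
  have hrhsB : ∀ ε : ℝ, 0 < ε → ε ≤ 1 →
      ‖Complex.I*(ε:ℂ)*(2*(w ε)^2 + 1 - 2*(w ε)*x) + (ε:ℂ)^2 * (w ε)‖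
        ≤ ε * Q := by
    intro ε hε0 hε1
    have hb := hbound ε hε0 hε1
    have hqb : ‖2*(w ε)^2 + 1 - 2*(w ε)*x‖ ≤ 2*M^2 + 2*M*|x| + 1 := by
      calc ‖2*(w ε)^2 + 1 - 2*(w ε)*(x:ℂ)‖
          ≤ ‖2*(w ε)^2 + 1‖ + ‖2*(w ε)*(x:ℂ)‖ :=
            norm_sub_le _ _
        _ ≤ ‖2*(w ε)^2‖ + ‖(1:ℂ)‖ + ‖2*(w ε)*(x:ℂ)‖ :=
            by linarith [norm_add_le (2*(w ε)^2) 1]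
        _ ≤ 2*M^2 + 2*M*|x| + 1 := by
            rw [norm_mul, norm_mul, norm_mul, norm_pow]
            simp only [Complex.norm_real, Real.norm_eq_abs, Complex.norm_two, norm_one]
            nlinarith [norm_nonneg (w ε), abs_nonneg x]
    calc ‖Complex.I*(ε:ℂ)*(2*(w ε)^2 + 1 - 2*(w ε)*x) + (ε:ℂ)^2 * (w ε)‖
        ≤ ‖Complex.I*(ε:ℂ)*(2*(w ε)^2 + 1 - 2*(w ε)*x)‖
          + ‖(ε:ℂ)^2 * (w ε)‖ := norm_add_le _ _
      _ ≤ ε * (2*M^2 + 2*M*|x| + 1) + ε^2 * M := by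
          rw [norm_mul, norm_mul, norm_mul, norm_pow]
          simp only [Complex.norm_real, Real.norm_eq_abs, Complex.norm_I, one_mul, abs_of_pos hε0]
          nlinarith [hqb, norm_nonneg (2*(w ε)^2 + 1 - 2*(w ε)*x),
            norm_nonneg (w ε)]
      _ ≤ ε * Q := by
          rw [hQ]
          nlinarith [mul_nonneg (mul_nonneg hε0.le hMpos.le) (sub_nonneg.mpr hε1)]
  -- eventually some factor is small
  have hsmall : ∀ η : ℝ, 0 < η → ∀ᶠ ε in l,
      ‖w ε - r‖ < η ∨ ‖w ε - c1‖ < η ∨ ‖w ε - c2‖ < η := by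
    intro η hη
    have hmem : Set.Ioo (0:ℝ) (min 1 (η^3/(Q+1))) ∈ l := by
      refine Ioo_mem_nhdsGT_of_mem ?_
      constructor
      · exact le_refl _
      · positivity
    filter_upwards [hmem] with ε hε
    obtain ⟨hε0, hε1⟩ := hε
    have hε1' : ε < 1 := lt_of_lt_of_le hε1 (min_le_left _ _)
    have hε2 : ε < η^3/(Q+1) := lt_of_lt_of_le hε1 (min_le_right _ _)
    by_contra hcon
    push_neg at hcon
    obtain ⟨hna, hnb, hnc⟩ := hcon
    have heq := hroot ε hε0
    have habs := congrArg norm heq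
    rw [norm_mul, norm_mul] at habs
    have hrhs := hrhsB ε hε0 hε1'.le
    rw [← habs] at hrhs
    have hprod : η^3 ≤ ‖w ε - ↑r‖ * (‖w ε - c1‖ * ‖w ε - c2‖) := by
      have hbc : η*η ≤ ‖w ε - c1‖ * ‖w ε - c2‖ :=
        mul_le_mul hnb hnc hη.le (norm_nonneg _)
      calc η^3 = η*(η*η) := by ring
        _ ≤ ‖w ε - ↑r‖ * (‖w ε - c1‖ * ‖w ε - c2‖) :=
          mul_le_mul hna hbc (by positivity) (norm_nonneg _)
    have hlt : ε * (Q+1) < η^3 := (lt_div_iff₀ (by positivity)).mp hε2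
    nlinarith
  -- imaginary parts of differences
  have himr : ∀ ε : ℝ, |(w ε).im| ≤ ‖w ε - (r:ℂ)‖ := by
    intro ε
    have h := Complex.abs_im_le_norm (w ε - (r:ℂ))
    simpa using h
  have himc1 : ∀ ε : ℝ, |(w ε).im - β| ≤ ‖w ε - c1‖ := by
    intro ε
    have h := Complex.abs_im_le_norm (w ε - c1)
    simpa [hc1] using h
  have himc2 : ∀ ε : ℝ, |(w ε).im + β| ≤ ‖w ε - c2‖ := by
    intro ε
    have h := Complex.abs_im_le_norm (w ε - c2)
    simpa [hc2, sub_neg_eq_add] using h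
  -- L is the imaginary part of one of the roots
  have hLmem : L = 0 ∨ L = β ∨ L = -β := by
    by_contra hcon
    push_neg at hcon
    obtain ⟨h1, h2, h3⟩ := hcon
    set η : ℝ := min |L| (min |L - β| |L + β|) with hηdef
    have hηpos : 0 < η := by
      refine lt_min (abs_pos.mpr h1) (lt_min (abs_pos.mpr (sub_ne_zero.mpr h2))
        (abs_pos.mpr ?_))
      intro h
      exact h3 (by linarith)
    have hev1 := hsmall (η/2) (by positivity)
    have hev2 : ∀ᶠ ε in l, |(w ε).im - L| < η/2 := by
      have := Metric.tendsto_nhds.mp hL (η/2) (by positivity)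
      simpa [Real.dist_eq] using this
    obtain ⟨ε, hεa, hεb⟩ := (hev1.and hev2).exists
    have hm1 : η ≤ |L| := min_le_left _ _
    have hm2 : η ≤ |L - β| := le_trans (min_le_right _ _) (min_le_left _ _)
    have hm3 : η ≤ |L + β| := le_trans (min_le_right _ _) (min_le_right _ _)
    have habsL : |L - (w ε).im| < η/2 := by rw [abs_sub_comm]; exact hεb
    rcases hεa with hca | hca | hca
    · have h5 := le_trans (himr ε) hca.le
      have h6 := abs_sub_le L ((w ε).im) 0
      simp only [sub_zero] at h6
      linarith
    · have h5 := le_trans (himc1 ε) hca.le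
      have h6 := abs_sub_le L ((w ε).im) β
      linarith
    · have h5 := le_trans (himc2 ε) hca.le
      have h6 := abs_sub_le L ((w ε).im) (-β)
      simp only [sub_neg_eq_add] at h6
      linarith
  -- L cannot be 0
  have hLne : L ≠ 0 := by
    intro hL0
    -- then w tends to the real root r
    have hwr : Tendsto w l (nhds (r:ℂ)) := by
      rw [Metric.tendsto_nhds]
      intro δ hδ
      have hηpos : 0 < min δ (β/2) := lt_min hδ (by linarith)
      have hev1 := hsmall (min δ (β/2)) hηpos
      have hL' : Tendsto (fun ε => (w ε).im) l (nhds 0) := hL0 ▸ hL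
      have hev2 : ∀ᶠ ε in l, |(w ε).im| < β/2 := by
        have := Metric.tendsto_nhds.mp hL' (β/2) (by linarith)
        simpa [Real.dist_eq] using this
      filter_upwards [hev1, hev2] with ε h1 h2
      rcases h1 with h | h | h
      · rw [Complex.dist_eq]
        exact lt_of_lt_of_le h (min_le_left _ _)
      · exfalso
        have h5 : |(w ε).im - β| < β/2 :=
          lt_of_le_of_lt (himc1 ε) (lt_of_lt_of_le h (min_le_right _ _))
        have h6 := abs_lt.mp h5
        have h7 := abs_lt.mp h2
        linarith [h6.1, h7.2]
      · exfalso
        have h5 : |(w ε).im + β| < β/2 :=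
          lt_of_le_of_lt (himc2 ε) (lt_of_lt_of_le h (min_le_right _ _))
        have h6 := abs_lt.mp h5
        have h7 := abs_lt.mp h2
        linarith [h6.2, h7.1]
    -- limits of auxiliary quantities
    set K : ℝ := (r - a)^2 + β^2 with hK
    have hKpos : 0 < K := by rw [hK]; positivity
    have hKval : ((r:ℂ) - c1) * ((r:ℂ) - c2) = ((K:ℝ):ℂ) := by
      rw [hc1, hc2, hK]
      push_cast
      linear_combination (-((β:ℝ):ℂ)^2) * Complex.I_sq
    have hPlim : Tendsto (fun ε => (w ε - c1) * (w ε - c2)) l (nhds ((K:ℝ):ℂ)) := by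
      rw [← hKval]
      exact (hwr.sub tendsto_const_nhds).mul (hwr.sub tendsto_const_nhds)
    have hPre : Tendsto (fun ε => ((w ε - c1) * (w ε - c2)).re) l (nhds K) := by
      have h := (Complex.continuous_re.tendsto _).comp hPlim
      simpa only [Complex.ofReal_re, Function.comp_def] using h
    have hPim : Tendsto (fun ε => ((w ε - c1) * (w ε - c2)).im) l (nhds 0) := by
      have h := (Complex.continuous_im.tendsto _).comp hPlim
      simpa only [Complex.ofReal_im, Function.comp_def] using h
    have hqlim : Tendsto (fun ε => (2*(w ε)^2 + 1 - 2*(w ε)*(x:ℂ)).re) l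
        (nhds (2*r^2 - 2*x*r + 1)) := by
      have hcont : Continuous (fun W : ℂ => 2*W^2 + 1 - 2*W*(x:ℂ)) := by continuity
      have h := (hcont.tendsto _).comp hwr
      have h2 := (Complex.continuous_re.tendsto _).comp h
      have hval : (2*((r:ℝ):ℂ)^2 + 1 - 2*((r:ℝ):ℂ)*(x:ℂ)).re = 2*r^2 - 2*x*r + 1 := by
        rw [show (2*((r:ℝ):ℂ)^2 + 1 - 2*((r:ℝ):ℂ)*(x:ℂ)) = (((2*r^2 - 2*x*r + 1 : ℝ)):ℂ) by
          push_cast; ring]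
        exact Complex.ofReal_re _
      rw [hval] at h2
      exact h2
    -- choose a good ε
    have hkQ : 0 < 2*r^2 - 2*x*r + 1 := hk
    have e1 : Set.Ioo (0:ℝ) (min 1 ((2*r^2 - 2*x*r + 1)/(8*M))) ∈ l := by
      refine Ioo_mem_nhdsGT_of_mem ⟨le_refl _, ?_⟩
      positivity
    have e2 := hPre.eventually (eventually_ge_nhds (by linarith : K/2 < K))
    have e3 : ∀ᶠ ε in l, |((w ε - c1) * (w ε - c2)).im|
        ≤ (2*r^2 - 2*x*r + 1)*K/(16*Q) := by
      have h := Metric.tendsto_nhds.mp hPim ((2*r^2 - 2*x*r + 1)*K/(16*Q)) (by positivity)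
      filter_upwards [h] with ε hε
      rw [Real.dist_eq, sub_zero] at hε
      exact hε.le
    have e4 := hqlim.eventually (eventually_ge_nhds
      (by linarith : (2*r^2 - 2*x*r + 1)/2 < 2*r^2 - 2*x*r + 1))
    have e1' : ∀ᶠ ε in l, ε ∈ Set.Ioo (0:ℝ) (min 1 ((2*r^2 - 2*x*r + 1)/(8*M))) :=
      Filter.eventually_mem_set.mpr e1
    obtain ⟨ε, hε1, hε2, hε3, hε4⟩ := (e1'.and (e2.and (e3.and e4))).exists
    obtain ⟨hε0, hεlt⟩ := hε1
    have hεle1 : ε ≤ 1 := le_trans hεlt.le (min_le_left _ _)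
    have hεlek : ε ≤ (2*r^2 - 2*x*r + 1)/(8*M) := le_trans hεlt.le (min_le_right _ _)
    have heq := hroot ε hε0
    have hE := congrArg Complex.im heq
    rw [Complex.mul_im] at hE
    have hrhsim : (Complex.I*(ε:ℂ)*(2*(w ε)^2 + 1 - 2*(w ε)*(x:ℂ)) + (ε:ℂ)^2 * (w ε)).im
        = ε*(2*(w ε)^2 + 1 - 2*(w ε)*(x:ℂ)).re + ε^2*(w ε).im := by
      simp only [Complex.add_im, Complex.mul_im, Complex.mul_re, Complex.I_re, Complex.I_im,
        Complex.ofReal_re, Complex.ofReal_im, ← Complex.ofReal_pow]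
      ring
    rw [hrhsim] at hE
    rw [Complex.sub_re, Complex.sub_im, Complex.ofReal_re, Complex.ofReal_im, sub_zero] at hE
    have habsδP := congrArg norm heq
    rw [norm_mul] at habsδP
    have hδP : ‖w ε - (r:ℂ)‖ * ‖(w ε - c1) * (w ε - c2)‖ ≤ ε * Q := by
      rw [habsδP]
      exact hrhsB ε hε0 hεle1
    have habsP : K/2 ≤ ‖(w ε - c1) * (w ε - c2)‖ :=
      le_trans hε2 (Complex.re_le_norm _)
    have hδ : ‖w ε - (r:ℂ)‖ * K ≤ 2 * (ε * Q) := by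
      nlinarith [norm_nonneg (w ε - (r:ℂ)), norm_nonneg ((w ε - c1)*(w ε - c2))]
    have hre : |(w ε).re - r| ≤ ‖w ε - (r:ℂ)‖ := by
      have h := Complex.abs_re_le_norm (w ε - (r:ℂ))
      simpa using h
    have himu : (w ε).im < 0 := hIm_neg ε hε0
    have humb : |(w ε).im| ≤ M := le_trans (Complex.abs_im_le_norm _) (hbound ε hε0 hεle1)
    have t1 : (w ε).im * ((w ε - c1) * (w ε - c2)).re ≤ 0 := by nlinarith
    have t2 : ((w ε).re - r) * ((w ε - c1) * (w ε - c2)).im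
        ≤ ε * ((2*r^2 - 2*x*r + 1)/8) := by
      have hreK : |(w ε).re - r| ≤ 2*(ε*Q)/K := by
        rw [le_div_iff₀ hKpos]
        exact le_trans (mul_le_mul_of_nonneg_right hre hKpos.le) hδ
      have habs2 : |((w ε).re - r) * ((w ε - c1) * (w ε - c2)).im|
          ≤ (2*(ε*Q)/K) * ((2*r^2 - 2*x*r + 1)*K/(16*Q)) := by
        rw [abs_mul]
        exact mul_le_mul hreK hε3 (abs_nonneg _) (by positivity)
      have hq2 : (2*(ε*Q)/K) * ((2*r^2 - 2*x*r + 1)*K/(16*Q))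
          = ε * ((2*r^2 - 2*x*r + 1)/8) := by
        field_simp
        ring
      calc ((w ε).re - r) * ((w ε - c1) * (w ε - c2)).im
          ≤ |((w ε).re - r) * ((w ε - c1) * (w ε - c2)).im| := le_abs_self _
        _ ≤ (2*(ε*Q)/K) * ((2*r^2 - 2*x*r + 1)*K/(16*Q)) := habs2
        _ = ε * ((2*r^2 - 2*x*r + 1)/8) := hq2
    have t3 : ε * ((2*r^2 - 2*x*r + 1)/2) ≤ ε * (2*(w ε)^2 + 1 - 2*(w ε)*(x:ℂ)).re :=
      mul_le_mul_of_nonneg_left hε4 hε0.le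
    have t4 : -(ε * ((2*r^2 - 2*x*r + 1)/8)) ≤ ε^2 * (w ε).im := by
      have h8 : ε * M ≤ (2*r^2 - 2*x*r + 1)/8 := by
        rw [le_div_iff₀ (by positivity : (0:ℝ) < 8*M)] at hεlek
        nlinarith
      nlinarith [abs_le.mp humb, hε0]
    nlinarith [hE, t1, t2, t3, t4, mul_pos hε0 hk]
  rcases hLmem with h | h | h
  · exact absurd h hLne
  · exfalso; linarith
  · have hπρ : Real.pi * ρ x = Real.pi * ρtwo x := by
      rw [hβρ]
      have : -Real.pi * ρ x = -β := h
      linarith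
    exact mul_left_cancel₀ Real.pi_ne_zero hπρ

lemma ρtwo_asymp : Tendsto (fun x : ℝ => ρtwo x / |x| ^ ((1 : ℝ) / 3))
    (nhdsWithin 0 {(0 : ℝ)}ᶜ) (nhds (Real.sqrt 3 / (2 * Real.pi))) := by
  have h30 : (0:ℝ) < Real.sqrt 3 := Real.sqrt_pos.mpr (by norm_num)
  have h3 : Real.sqrt 3 ^ 2 = 3 := Real.sq_sqrt (by norm_num)
  set c : ℝ := (2 / (3 * Real.sqrt 3)) ^ ((1:ℝ)/3) with hc
  set f : ℝ → ℝ := fun x => (3 / (4 * Real.pi)) * c *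
      ((1 + Real.sqrt (1 - 4 * x ^ 2 / 27)) ^ ((2 : ℝ) / 3)
        - (1 - Real.sqrt (1 - 4 * x ^ 2 / 27)) ^ ((2 : ℝ) / 3)) with hf
  have heq : ∀ᶠ x in nhdsWithin (0:ℝ) {(0:ℝ)}ᶜ,
      ρtwo x / |x| ^ ((1 : ℝ) / 3) = f x := by
    filter_upwards [self_mem_nhdsWithin] with x hx
    have hx0 : x ≠ 0 := hx
    have habs : 0 < |x| := abs_pos.mpr hx0
    have hpow : (0:ℝ) < |x| ^ ((1:ℝ)/3) := Real.rpow_pos_of_pos habs _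
    have hsplit : (2 * |x| / (3 * Real.sqrt 3)) ^ ((1:ℝ)/3) = c * |x| ^ ((1:ℝ)/3) := by
      rw [show 2 * |x| / (3 * Real.sqrt 3) = (2 / (3 * Real.sqrt 3)) * |x| by ring,
        Real.mul_rpow (by positivity) (abs_nonneg x), hc]
    rw [ρtwo, hf, hsplit]
    field_simp
  rw [tendsto_congr' heq]
  have hs : Tendsto (fun x : ℝ => Real.sqrt (1 - 4 * x ^ 2 / 27)) (nhds 0) (nhds 1) := by
    have hcont : Continuous (fun x : ℝ => Real.sqrt (1 - 4 * x ^ 2 / 27)) := by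
      fun_prop
    have := hcont.tendsto 0
    norm_num at this
    exact this
  have h2 : Tendsto (fun s : ℝ => (1 + s) ^ ((2:ℝ)/3)) (nhds 1) (nhds (2 ^ ((2:ℝ)/3))) := by
    have hca : ContinuousAt (fun t : ℝ => t ^ ((2:ℝ)/3)) 2 :=
      Real.continuousAt_rpow_const 2 _ (Or.inl two_ne_zero)
    have hadd : Tendsto (fun s : ℝ => 1 + s) (nhds 1) (nhds 2) :=
      Continuous.tendsto' (by continuity) 1 2 (by norm_num)
    exact hca.tendsto.comp hadd
  have h2' : Tendsto (fun s : ℝ => (1 - s) ^ ((2:ℝ)/3)) (nhds 1) (nhds 0) := by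
    have hca : ContinuousAt (fun t : ℝ => t ^ ((2:ℝ)/3)) 0 :=
      Real.continuousAt_rpow_const 0 _ (Or.inr (by norm_num))
    have hsub : Tendsto (fun s : ℝ => 1 - s) (nhds 1) (nhds 0) :=
      Continuous.tendsto' (by continuity) 1 0 (by norm_num)
    have := hca.tendsto.comp hsub
    rw [Real.zero_rpow (by norm_num : (2:ℝ)/3 ≠ 0)] at this
    exact this
  have hval : (3 / (4 * Real.pi)) * c * (2 ^ ((2:ℝ)/3) - 0) = Real.sqrt 3 / (2 * Real.pi) := by
    have hcc : c * 2 ^ ((2:ℝ)/3) = 2 / Real.sqrt 3 := by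
      apply cube_inj (by positivity) (by positivity)
      rw [mul_pow, hc, rpow_third_cube (by positivity), rpow_twothird_cube (by norm_num)]
      rw [div_pow, show Real.sqrt 3 ^ 3 = Real.sqrt 3 ^ 2 * Real.sqrt 3 by ring, h3]
      field_simp
    rw [sub_zero, mul_assoc, hcc]
    have hpi : Real.pi ≠ 0 := Real.pi_ne_zero
    field_simp
    nlinarith [h3, Real.pi_pos]
  rw [← hval]
  have hmain : Tendsto (fun x : ℝ => (3 / (4 * Real.pi)) * c *
      ((1 + Real.sqrt (1 - 4 * x ^ 2 / 27)) ^ ((2 : ℝ) / 3)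
        - (1 - Real.sqrt (1 - 4 * x ^ 2 / 27)) ^ ((2 : ℝ) / 3))) (nhds 0)
      (nhds ((3 / (4 * Real.pi)) * c * (2 ^ ((2:ℝ)/3) - 0))) :=
    tendsto_const_nhds.mul ((h2.comp hs).sub (h2'.comp hs))
  exact hmain.mono_left nhdsWithin_le_nhds

/-- At `t = 1` the two-source density, obtained from the cubic
`G³ − 2zG² + z²G − z = 0` (branch with `Im G < 0` on the upper half-plane) via
`ρ(1,x) = −(1/π) lim_{ε↓0} Im G(1, x+iε)`, equals the explicit formula `ρtwo` on
`0 < |x| < 3√3/2`, and behaves asymptotically as `(√3/(2π))|x|^{1/3}` as `x → 0`. -/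
theorem two_source_density_at_merge (G : ℂ → ℂ) (ρ : ℝ → ℝ)
    (hcubic : ∀ z : ℂ, z.im ≠ 0 →
      (G z) ^ 3 - 2 * z * (G z) ^ 2 + z ^ 2 * G z - z = 0)
    (hbranch : ∀ z : ℂ, 0 < z.im → (G z).im < 0)
    (hρ : ∀ x : ℝ, Tendsto
      (fun ε : ℝ => -(1 / Real.pi) * (G ((x : ℂ) + Complex.I * ε)).im)
      (nhdsWithin 0 (Set.Ioi 0)) (nhds (ρ x))) :
    (∀ x : ℝ, 0 < |x| → |x| < 3 * Real.sqrt 3 / 2 → ρ x = ρtwo x) ∧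
    Tendsto (fun x : ℝ => ρtwo x / |x| ^ ((1 : ℝ) / 3))
      (nhdsWithin 0 {(0 : ℝ)}ᶜ) (nhds (Real.sqrt 3 / (2 * Real.pi))) := by
  constructor
  · intro x hx0 hx3
    exact density_eq G ρ hcubic hbranch hρ x hx0 hx3
  · exact ρtwo_asymp
end
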